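/- For u(x) = x·e^{-β x²} on (0,∞) with β > 0, one has (∫₀^∞ |u'(x)|² dx)·(∫₀^∞ x² |u(x)|² dx) = (9/4)·(∫₀^∞ |u(x)|² dx)². -/

import Mathlib

open MeasureTheory Set

lemma gauss_moment_aux (b : ℝ) (hb : 0 < b) (n : ℕ) :
    ∫ x in Ioi (0 : ℝ), x ^ n * Real.exp (-b * x ^ 2)
      = b ^ (-((n : ℝ) + 1) / 2) * (1 / 2) * Real.Gamma (((n : ℝ) + 1) / 2) := by
  rw [← integral_rpow_mul_exp_neg_mul_rpow (p := 2) (q := (n : ℝ)) two_pos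
      (by have := n.cast_nonneg (α := ℝ); linarith) hb]
  refine setIntegral_congr_fun measurableSet_Ioi (fun x hx => ?_)
  rw [Real.rpow_natCast, show ((2 : ℝ)) = ((2 : ℕ) : ℝ) by norm_num, Real.rpow_natCast]

lemma gauss_moment_integrable (b : ℝ) (hb : 0 < b) (n : ℕ) :
    IntegrableOn (fun x : ℝ => x ^ n * Real.exp (-b * x ^ 2)) (Ioi (0 : ℝ)) := by
  refine (integrableOn_rpow_mul_exp_neg_mul_sq hb
    (s := (n : ℝ)) (by have := n.cast_nonneg (α := ℝ); linarith)).congr_fun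
    (fun x hx => ?_) measurableSet_Ioi
  simp only [Real.rpow_natCast]

/-- The function `u(x) = x e^{-β x²}` achieves equality in the Heisenberg Uncertainty
Principle on the half-line `(0, ∞)` with the sharp constant `9/4`. -/
theorem hup_halfline_extremal (β : ℝ) (hβ : 0 < β) :
    let u : ℝ → ℝ := fun x => x * Real.exp (-β * x ^ 2)
    (∫ x in Ioi (0 : ℝ), (deriv u x) ^ 2) * (∫ x in Ioi (0 : ℝ), x ^ 2 * (u x) ^ 2)
      = (9 / 4 : ℝ) * (∫ x in Ioi (0 : ℝ), (u x) ^ 2) ^ 2 := by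
  intro u
  set b : ℝ := 2 * β with hbdef
  have hb : 0 < b := by positivity
  -- derivative of u
  have hderiv : ∀ x : ℝ, deriv u x = (1 - 2 * β * x ^ 2) * Real.exp (-β * x ^ 2) := by
    intro x
    have h1 : HasDerivAt (fun x : ℝ => -β * x ^ 2) (-β * (2 * x ^ 1)) x :=
      (hasDerivAt_pow 2 x).const_mul (-β)
    have h2 := h1.exp
    have h3 := (hasDerivAt_id x).mul h2
    have h4 : HasDerivAt u ((1 - 2 * β * x ^ 2) * Real.exp (-β * x ^ 2)) x := by
      refine HasDerivAt.congr_deriv (h3 : HasDerivAt u _ x) ?_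
      simp only [id_eq]
      ring
    exact h4.deriv
  -- rewrite integrands
  have hexp2 : ∀ x : ℝ, Real.exp (-β * x ^ 2) ^ 2 = Real.exp (-b * x ^ 2) := by
    intro x
    rw [sq, ← Real.exp_add]
    congr 1
    rw [hbdef]; ring
  have e1 : (∫ x in Ioi (0 : ℝ), (deriv u x) ^ 2)
      = (∫ x in Ioi (0 : ℝ), x ^ 0 * Real.exp (-b * x ^ 2))
        - 2 * b * (∫ x in Ioi (0 : ℝ), x ^ 2 * Real.exp (-b * x ^ 2))
        + b ^ 2 * (∫ x in Ioi (0 : ℝ), x ^ 4 * Real.exp (-b * x ^ 2)) := by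
    have i0 := gauss_moment_integrable b hb 0
    have i2 := (gauss_moment_integrable b hb 2).const_mul (2 * b)
    have i4 := (gauss_moment_integrable b hb 4).const_mul (b ^ 2)
    have i02 : Integrable
        (fun x : ℝ => x ^ 0 * Real.exp (-b * x ^ 2) - 2 * b * (x ^ 2 * Real.exp (-b * x ^ 2)))
        (volume.restrict (Ioi 0)) := i0.sub i2
    rw [← integral_const_mul, ← integral_const_mul, ← integral_sub i0 i2,
      ← integral_add i02 i4]
    refine setIntegral_congr_fun measurableSet_Ioi (fun x hx => ?_)
    rw [hderiv x, mul_pow, hexp2 x, hbdef]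
    ring
  have e2 : (∫ x in Ioi (0 : ℝ), x ^ 2 * (u x) ^ 2)
      = ∫ x in Ioi (0 : ℝ), x ^ 4 * Real.exp (-b * x ^ 2) := by
    refine setIntegral_congr_fun measurableSet_Ioi (fun x hx => ?_)
    simp only [u, mul_pow, hexp2 x]
    ring
  have e3 : (∫ x in Ioi (0 : ℝ), (u x) ^ 2)
      = ∫ x in Ioi (0 : ℝ), x ^ 2 * Real.exp (-b * x ^ 2) := by
    refine setIntegral_congr_fun measurableSet_Ioi (fun x hx => ?_)
    simp only [u, mul_pow, hexp2 x]
  rw [e1, e2, e3, gauss_moment_aux b hb 0, gauss_moment_aux b hb 2, gauss_moment_aux b hb 4]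
  -- powers of b
  set s : ℝ := b ^ (-(1 : ℝ) / 2) with hsdef
  have hpow : ∀ n : ℕ, b ^ (-((n : ℝ) + 1) / 2) = s ^ (n + 1) := by
    intro n
    rw [hsdef, ← Real.rpow_natCast (b ^ (-(1 : ℝ) / 2)) (n + 1), ← Real.rpow_mul hb.le]
    congr 1
    push_cast
    ring
  have hs2 : 2 * β * s ^ 2 = 1 := by
    have : s ^ 2 = b⁻¹ := by
      rw [hsdef, ← Real.rpow_natCast (b ^ (-(1 : ℝ) / 2)) 2, ← Real.rpow_mul hb.le,
        show (-(1 : ℝ) / 2 * ((2 : ℕ) : ℝ)) = -1 by push_cast; ring, Real.rpow_neg_one]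
    rw [this, hbdef]
    field_simp
  have h0 : ((0 : ℕ) : ℝ) + 1 = 1 := by norm_num
  have h2 : ((2 : ℕ) : ℝ) + 1 = 3 := by norm_num
  have h4 : ((4 : ℕ) : ℝ) + 1 = 5 := by norm_num
  rw [hpow 0, hpow 2, hpow 4, h0, h2, h4]
  -- Gamma values
  have G1 : Real.Gamma (1 / 2) = Real.sqrt Real.pi := Real.Gamma_one_half_eq
  have G3 : Real.Gamma (3 / 2) = Real.sqrt Real.pi / 2 := by
    rw [show (3 / 2 : ℝ) = 1 / 2 + 1 by norm_num, Real.Gamma_add_one (by norm_num), G1]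
    ring
  have G5 : Real.Gamma (5 / 2) = 3 * Real.sqrt Real.pi / 4 := by
    rw [show (5 / 2 : ℝ) = 3 / 2 + 1 by norm_num, Real.Gamma_add_one (by norm_num), G3]
    ring
  rw [G1, G3, G5, hbdef]
  linear_combination (Real.sqrt Real.pi ^ 2 * s ^ 6 * (18 * β * s ^ 2 - 3) / 64) * hs2
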